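/- Suppose the posterior is multinomial-logistic: P(Y=k|X=x) = exp(β_k^T x)/Σ_{j=1}^K exp(β_j^T x) with β_K = 0, all c_k > 0, X has a density on ℝ^p bounded by M, and for each j ≤ K−1 the linear functional β_j^T X has a density bounded by M on ℝ. Let φ_K(x) = c_K P(Y=K|X=x) − max_{j≤K−1} c_j P(Y=j|X=x). Then there exist constants C₁ > 0 and t₀ ∈ (0,1) such that for all 0 ≤ t ≤ t₀, P(|φ_K(X)| ≤ t) ≤ C₁ t. -/
import Mathlib

open MeasureTheory Set ENNReal

private lemma sup'_div_aux {ι : Type*} (s : Finset ι) (hs : s.Nonempty) (f : ι → ℝ) (d : ℝ)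
    (hd : 0 < d) : s.sup' hs (fun j => f j / d) = s.sup' hs f / d := by
  apply le_antisymm
  · exact Finset.sup'_le _ _ fun j hj => by gcongr; exact Finset.le_sup' f hj
  · obtain ⟨j, hj, hje⟩ := Finset.exists_mem_eq_sup' hs f
    rw [hje]; exact Finset.le_sup' (fun j => f j / d) hj

set_option maxHeartbeats 2000000 in
theorem stmt13 {p K : ℕ} (hK : 0 < K)
    (M : ℝ) (hM : 0 < M)
    (β : Fin (K + 1) → Fin p → ℝ) (hβlast : β (Fin.last K) = 0)
    (c : Fin (K + 1) → ℝ) (hc : ∀ k, 0 < c k)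
    (ν : Measure (Fin p → ℝ)) [IsProbabilityMeasure ν]
    (post : (Fin p → ℝ) → Fin (K + 1) → ℝ)
    (hpost : ∀ x k, post x k =
      Real.exp (∑ i, β k i * x i) / ∑ j, Real.exp (∑ i, β j i * x i))
    (hXdens : ∃ f : (Fin p → ℝ) → ℝ≥0∞,
      ν = (volume : Measure (Fin p → ℝ)).withDensity f ∧ ∀ x, f x ≤ ENNReal.ofReal M)
    (hlindens : ∀ j : Fin (K + 1), j ≠ Fin.last K →
      ∃ g : ℝ → ℝ≥0∞, ν.map (fun x => ∑ i, β j i * x i)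
          = (volume : Measure ℝ).withDensity g ∧ ∀ s, g s ≤ ENNReal.ofReal M)
    (hne : (Finset.univ.erase (Fin.last K)).Nonempty)
    (φK : (Fin p → ℝ) → ℝ)
    (hφK : ∀ x, φK x = c (Fin.last K) * post x (Fin.last K)
      - (Finset.univ.erase (Fin.last K)).sup' hne (fun j => c j * post x j)) :
    ∃ C₁ : ℝ, 0 < C₁ ∧ ∃ t₀ ∈ Set.Ioo (0:ℝ) 1, ∀ t : ℝ, 0 ≤ t → t ≤ t₀ →
      (ν {x | |φK x| ≤ t}).toReal ≤ C₁ * t := by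
  classical
  have hne' : (Finset.univ : Finset (Fin (K+1))).Nonempty := ⟨Fin.last K, Finset.mem_univ _⟩
  obtain ⟨cmin, hcmin_pos, hcmin_le⟩ : ∃ cm : ℝ, 0 < cm ∧ ∀ k, cm ≤ c k :=
    ⟨Finset.univ.inf' hne' c, (Finset.lt_inf'_iff hne').mpr (fun k _ => hc k),
      fun k => Finset.inf'_le c (Finset.mem_univ k)⟩
  set cK : ℝ := c (Fin.last K) with hcK_def
  have hcK : 0 < cK := hc _
  clear_value cK
  have hKR : (0:ℝ) < K := by exact_mod_cast hK
  obtain ⟨α, hα_def, hα0⟩ : ∃ al : ℝ, al = K / cmin ∧ 0 < al :=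
    ⟨K / cmin, rfl, div_pos hKR hcmin_pos⟩
  obtain ⟨A, hA_def, hA⟩ : ∃ Av : ℝ, Av = 1 + cK * α ∧ 1 ≤ Av :=
    ⟨1 + cK * α, rfl, by nlinarith⟩
  obtain ⟨L, hL_def, hL⟩ : ∃ Lv : ℝ, Lv = 9 * A / cK ∧ 0 < Lv :=
    ⟨9 * A / cK, rfl, by rw []; positivity⟩
  have hC : 0 < (K:ℝ) * M * L := mul_pos (mul_pos hKR hM) hL
  refine ⟨(K:ℝ) * M * L, hC, min (1/2) (min (cK/2) (1/(2*α))),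
    ⟨lt_min (by norm_num) (lt_min (half_pos hcK) (by positivity)),
     lt_of_le_of_lt (min_le_left _ _) (by norm_num)⟩, fun t ht0 htle => ?_⟩
  have ht1 : t ≤ cK/2 := htle.trans ((min_le_right _ _).trans (min_le_left _ _))
  have ht2' : t ≤ 1/(2*α) := htle.trans ((min_le_right _ _).trans (min_le_right _ _))
  have ht2 : t * α ≤ 1/2 := by
    rw [le_div_iff₀ (by positivity)] at ht2'; nlinarith
  have htα0 : 0 ≤ t * α := by positivity
  have h1tα : (0:ℝ) < 1 - t*α := by linarith
  have h1tα' : (0:ℝ) < 1 + t*α := by linarith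
  obtain ⟨a, ha_def⟩ : ∃ av : ℝ, av = (cK - t)/(1 + t*α) := ⟨_, rfl⟩
  obtain ⟨b, hb_def⟩ : ∃ bv : ℝ, bv = (cK + t)/(1 - t*α) := ⟨_, rfl⟩
  have ha_pos : 0 < a := ha_def ▸ div_pos (by linarith) h1tα'
  have ha_lb : cK/3 ≤ a := by rw [ha_def, le_div_iff₀ h1tα']; nlinarith
  have ha_ub : cK - t*A ≤ a := by
    rw [ha_def, le_div_iff₀ h1tα', hA_def]
    nlinarith [mul_nonneg (mul_nonneg ht0 ht0) hα0.le,
      mul_nonneg (mul_nonneg (mul_nonneg ht0 ht0) (mul_nonneg hα0.le hα0.le)) hcK.le]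
  have hb_ub : b ≤ cK + 2*t*A := by
    rw [hb_def, div_le_iff₀ h1tα, hA_def]
    have h₁ : 0 ≤ t * (1/2 - t*α) := mul_nonneg ht0 (by linarith)
    have h₂ : 0 ≤ t * α * (1/2 - t*α) := mul_nonneg (mul_nonneg ht0 hα0.le) (by linarith)
    nlinarith [h₁, h₂, mul_nonneg hcK.le h₂]
  have hab : a ≤ b := by
    have h1 : a ≤ cK := by rw [ha_def, div_le_iff₀ h1tα']; nlinarith
    have h2 : cK ≤ b := by rw [hb_def, le_div_iff₀ h1tα]; nlinarith
    linarith
  have hb_pos : 0 < b := lt_of_lt_of_le ha_pos hab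
  -- length of the log-interval
  have hlen : Real.log b - Real.log a ≤ L * t := by
    have h1 : Real.log (b/a) ≤ b/a - 1 := Real.log_le_sub_one_of_pos (by positivity)
    rw [Real.log_div (ne_of_gt hb_pos) (ne_of_gt ha_pos)] at h1
    have h2 : b/a - 1 = (b - a)/a := by field_simp
    have h3 : (b - a)/a ≤ (3*t*A)/(cK/3) :=
      div_le_div₀ (by positivity) (by linarith) (by positivity) ha_lb
    have h4 : (3*t*A)/(cK/3) = L * t := by rw [hL_def]; field_simp; ring
    linarith
  -- set inclusion
  have hincl : {x : Fin p → ℝ | |φK x| ≤ t} ⊆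
      ⋃ j ∈ Finset.univ.erase (Fin.last K),
        {x : Fin p → ℝ | (∑ i, β j i * x i) ∈ Icc (Real.log (a / c j)) (Real.log (b / c j))} := by
    intro x hx
    obtain ⟨D, hD_def⟩ : ∃ Dv : ℝ, Dv = ∑ j, Real.exp (∑ i, β j i * x i) := ⟨_, rfl⟩
    have hD : 0 < D := hD_def ▸ Finset.sum_pos (fun _ _ => Real.exp_pos _) hne'
    obtain ⟨m, hm_def⟩ : ∃ mv : ℝ, mv = (Finset.univ.erase (Fin.last K)).sup' hne
      (fun j => c j * Real.exp (∑ i, β j i * x i)) := ⟨_, rfl⟩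
    obtain ⟨j0, hj0mem⟩ := id hne
    have hm_pos : 0 < m := by
      rw [hm_def]
      exact lt_of_lt_of_le (mul_pos (hc j0) (Real.exp_pos _))
        (Finset.le_sup' (fun j => c j * Real.exp (∑ i, β j i * x i)) hj0mem)
    have hsum0 : ∑ i, β (Fin.last K) i * x i = 0 := by simp [hβlast]
    have hφ : φK x = (cK - m)/D := by
      rw [hφK]
      have hsup : (Finset.univ.erase (Fin.last K)).sup' hne (fun j => c j * post x j)
          = m / D := by
        rw [show (fun j => c j * post x j)
            = (fun j => (c j * Real.exp (∑ i, β j i * x i)) / D) from ?_]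
        · rw [sup'_div_aux _ hne _ D hD, hm_def]
        · funext j; rw [hpost, hD_def]; ring
      rw [hsup, hpost, hsum0, Real.exp_zero, ← hD_def]
      field_simp
    have hx' : |cK - m| ≤ t * D := by
      rw [Set.mem_setOf_eq, hφ, abs_div, abs_of_pos hD, div_le_iff₀ hD] at hx
      exact hx
    have hDle : D ≤ 1 + α * m := by
      have hsplit : D = 1 + ∑ j ∈ Finset.univ.erase (Fin.last K),
          Real.exp (∑ i, β j i * x i) := by
        rw [hD_def, ← Finset.add_sum_erase _ _ (Finset.mem_univ (Fin.last K)), hsum0,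
          Real.exp_zero]
      have hterm : ∀ j ∈ Finset.univ.erase (Fin.last K),
          Real.exp (∑ i, β j i * x i) ≤ m / cmin := by
        intro j hj
        have h1 : c j * Real.exp (∑ i, β j i * x i) ≤ m :=
          hm_def ▸ Finset.le_sup' (fun j => c j * Real.exp (∑ i, β j i * x i)) hj
        have h2 : Real.exp (∑ i, β j i * x i) ≤ m / c j := by
          rw [le_div_iff₀ (hc j)]; linarith
        exact h2.trans (div_le_div_of_nonneg_left hm_pos.le hcmin_pos (hcmin_le j))
      have hcard : (Finset.univ.erase (Fin.last K)).card = K := by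
        rw [Finset.card_erase_of_mem (Finset.mem_univ _), Finset.card_univ, Fintype.card_fin]; omega
      have hsum_le : ∑ j ∈ Finset.univ.erase (Fin.last K),
          Real.exp (∑ i, β j i * x i) ≤ K * (m / cmin) := by
        calc ∑ j ∈ Finset.univ.erase (Fin.last K), Real.exp (∑ i, β j i * x i)
            ≤ ∑ _j ∈ Finset.univ.erase (Fin.last K), (m / cmin) := Finset.sum_le_sum hterm
          _ = K * (m / cmin) := by rw [Finset.sum_const, hcard, nsmul_eq_mul]
      have hαm : α * m = K * (m / cmin) := by
        rw [hα_def]; field_simp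
      rw [hsplit]; linarith
    have habs := abs_le.mp hx'
    have hDt : t * D ≤ t * (1 + α * m) := mul_le_mul_of_nonneg_left hDle ht0
    have hm_ub : m ≤ b := by
      rw [hb_def, le_div_iff₀ h1tα]; nlinarith [habs.1, habs.2]
    have hm_lb : a ≤ m := by
      rw [ha_def, div_le_iff₀ h1tα']; nlinarith [habs.1, habs.2]
    obtain ⟨j, hjmem, hjeq⟩ := Finset.exists_mem_eq_sup' hne
      (fun j => c j * Real.exp (∑ i, β j i * x i))
    refine Set.mem_iUnion₂.mpr ⟨j, hjmem, ?_⟩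
    have hje : c j * Real.exp (∑ i, β j i * x i) = m := by rw [hm_def, hjeq]
    constructor
    · have h1 : a / c j ≤ Real.exp (∑ i, β j i * x i) := by
        rw [div_le_iff₀ (hc j)]; nlinarith [hje, hm_lb]
      have h2 := Real.log_le_log (div_pos ha_pos (hc j)) h1
      rwa [Real.log_exp] at h2
    · have h1 : Real.exp (∑ i, β j i * x i) ≤ b / c j := by
        rw [le_div_iff₀ (hc j)]; nlinarith [hje, hm_ub]
      have h2 := Real.log_le_log (Real.exp_pos _) h1
      rwa [Real.log_exp] at h2
  -- measure bound for each piece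
  have hmeas_f : ∀ j : Fin (K+1), Measurable (fun x : Fin p → ℝ => ∑ i, β j i * x i) :=
    fun j => Finset.measurable_sum _ fun i _ => (measurable_pi_apply i).const_mul _
  have hbound : ∀ j ∈ Finset.univ.erase (Fin.last K),
      ν {x : Fin p → ℝ | (∑ i, β j i * x i) ∈ Icc (Real.log (a / c j)) (Real.log (b / c j))}
        ≤ ENNReal.ofReal (M * (L * t)) := by
    intro j hj
    obtain ⟨g, hg, hgM⟩ := hlindens j (Finset.ne_of_mem_erase hj)
    have hset : {x : Fin p → ℝ | (∑ i, β j i * x i) ∈ Icc (Real.log (a / c j)) (Real.log (b / c j))}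
        = (fun x : Fin p → ℝ => ∑ i, β j i * x i) ⁻¹' Icc (Real.log (a / c j)) (Real.log (b / c j)) := rfl
    rw [hset, ← Measure.map_apply (hmeas_f j) measurableSet_Icc, hg,
      withDensity_apply _ measurableSet_Icc]
    have hloglen : Real.log (b / c j) - Real.log (a / c j) ≤ L * t := by
      rw [Real.log_div (ne_of_gt hb_pos) (ne_of_gt (hc j)),
        Real.log_div (ne_of_gt ha_pos) (ne_of_gt (hc j))]
      linarith
    calc ∫⁻ s in Icc (Real.log (a / c j)) (Real.log (b / c j)), g s
        ≤ ∫⁻ _s in Icc (Real.log (a / c j)) (Real.log (b / c j)), ENNReal.ofReal M :=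
          lintegral_mono fun s => hgM s
      _ = ENNReal.ofReal M * volume (Icc (Real.log (a / c j)) (Real.log (b / c j))) :=
          setLIntegral_const _ _
      _ = ENNReal.ofReal M * ENNReal.ofReal (Real.log (b / c j) - Real.log (a / c j)) := by
          rw [Real.volume_Icc]
      _ ≤ ENNReal.ofReal (M * (L * t)) := by
          rw [← ENNReal.ofReal_mul hM.le]
          exact ENNReal.ofReal_le_ofReal (mul_le_mul_of_nonneg_left hloglen hM.le)
  have hcard : (Finset.univ.erase (Fin.last K)).card = K := by
    rw [Finset.card_erase_of_mem (Finset.mem_univ _), Finset.card_univ, Fintype.card_fin]; omega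
  have hν : ν {x | |φK x| ≤ t} ≤ ENNReal.ofReal ((K:ℝ) * M * L * t) := by
    calc ν {x | |φK x| ≤ t}
        ≤ ν (⋃ j ∈ Finset.univ.erase (Fin.last K),
            {x : Fin p → ℝ | (∑ i, β j i * x i) ∈ Icc (Real.log (a / c j)) (Real.log (b / c j))}) :=
          measure_mono hincl
      _ ≤ ∑ j ∈ Finset.univ.erase (Fin.last K),
            ν {x : Fin p → ℝ | (∑ i, β j i * x i) ∈ Icc (Real.log (a / c j)) (Real.log (b / c j))} :=
          measure_biUnion_finset_le _ _
      _ ≤ ∑ _j ∈ Finset.univ.erase (Fin.last K), ENNReal.ofReal (M * (L * t)) :=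
          Finset.sum_le_sum hbound
      _ = (K : ℝ≥0∞) * ENNReal.ofReal (M * (L * t)) := by
          rw [Finset.sum_const, hcard, nsmul_eq_mul]
      _ = ENNReal.ofReal ((K:ℝ) * M * L * t) := by
          rw [← ENNReal.ofReal_natCast K, ← ENNReal.ofReal_mul (Nat.cast_nonneg K)]
          congr 1; ring
  exact ENNReal.toReal_le_of_le_ofReal (by positivity) hν
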